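/- Optimal betting for single-lottery betting with fair odds: for a full-support PMF p on finite X, fair odds o (i.e., ∑ₓ 1/o(x) = 1), and risk-aversion R > 1, max over all PMFs b of log w^ICE(p, o, b, u_R) equals the bivariate Rényi divergence D_{1/R}(p ‖ o⁻¹) of order α = 1/R, i.e., max_b (1/(1−R)) log ∑ₓ p(x)(b(x)o(x))^{1−R} = (1/(α−1)) log ∑ₓ p(x)^α (1/o(x))^{1−α} with α = 1/R. -/

import Mathlib

private lemma eq_of_log_eq {A B : ℝ} (hA : 0 < A) (hB : 0 < B)
    (h : Real.log A = Real.log B) : A = B := by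
  rw [← Real.exp_log hA, ← Real.exp_log hB, h]

/-- Optimal betting for a single-lottery betting game with fair odds:
for `R > 1`, the maximum of the log isoelastic certainty equivalent over all
full-support betting strategies `b` equals the bivariate Rényi divergence of
order `α = 1/R` between `p` and the inverse odds. -/
theorem single_lottery_optimal_betting_fair_odds
    {X : Type*} [Fintype X] [Nonempty X]
    (p o : X → ℝ) (R : ℝ)
    (hp_pos : ∀ x, 0 < p x) (hp_sum : ∑ x, p x = 1)
    (ho_pos : ∀ x, 0 < o x) (ho_fair : ∑ x, 1 / o x = 1)
    (hR : 1 < R) :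
    IsGreatest
      {v : ℝ | ∃ b : X → ℝ, (∀ x, 0 < b x) ∧ (∑ x, b x = 1) ∧
        v = (1 / (1 - R)) * Real.log (∑ x, p x * (b x * o x) ^ (1 - R))}
      ((1 / (1 / R - 1)) *
        Real.log (∑ x, (p x) ^ (1 / R) * (1 / o x) ^ (1 - 1 / R))) := by
  have hR0 : (0:ℝ) < R := by linarith
  have hinv : ∀ x, (1 / o x) ^ (1 - 1 / R) = (o x) ^ ((1 - R) / R) := by
    intro x
    have hox := ho_pos x
    apply eq_of_log_eq (by positivity) (by positivity)
    rw [Real.log_rpow (by positivity), Real.log_rpow hox, one_div (o x),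
      Real.log_inv]
    field_simp
    ring
  set Z : ℝ := ∑ x, (p x) ^ (1 / R) * (1 / o x) ^ (1 - 1 / R) with hZdef
  have hterm_pos : ∀ x, 0 < (p x) ^ (1 / R) * (1 / o x) ^ (1 - 1 / R) := fun x =>
    mul_pos (Real.rpow_pos_of_pos (hp_pos x) _)
      (Real.rpow_pos_of_pos (by have := ho_pos x; positivity) _)
  have hZpos : 0 < Z := Finset.sum_pos (fun x _ => hterm_pos x) Finset.univ_nonempty
  have hval : (1 / (1 / R - 1)) * Real.log Z = (1 / (1 - R)) * Real.log (Z ^ R) := by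
    rw [Real.log_rpow hZpos]
    have h1 : 1 / R - 1 ≠ 0 := by
      intro h
      have : R = 1 := by field_simp at h; linarith
      linarith
    field_simp
  constructor
  · -- membership: the optimal strategy
    refine ⟨fun x => (p x) ^ (1 / R) * (1 / o x) ^ (1 - 1 / R) / Z,
      fun x => div_pos (hterm_pos x) hZpos, ?_, ?_⟩
    · rw [← Finset.sum_div, ← hZdef, div_self hZpos.ne']
    · rw [hval]
      congr 2
      have key : ∀ x, p x * ((p x) ^ (1 / R) * (1 / o x) ^ (1 - 1 / R) / Z * o x)
            ^ (1 - R) = (p x) ^ (1 / R) * (1 / o x) ^ (1 - 1 / R) * Z ^ (R - 1) := by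
        intro x
        have hpx := hp_pos x; have hox := ho_pos x
        rw [hinv x]
        have h1 : 0 < (p x) ^ (1/R) * (o x) ^ ((1-R)/R) / Z * o x := by positivity
        apply eq_of_log_eq (by positivity) (by positivity)
        rw [Real.log_mul (hp_pos x).ne' (Real.rpow_pos_of_pos h1 _).ne',
          Real.log_rpow h1,
          Real.log_mul (by positivity) (Real.rpow_pos_of_pos hZpos _).ne',
          Real.log_mul (by positivity) (ho_pos x).ne',
          Real.log_div (by positivity) hZpos.ne',
          Real.log_mul (by positivity) (by positivity),
          Real.log_rpow (hp_pos x), Real.log_rpow (ho_pos x), Real.log_rpow hZpos]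
        field_simp
        ring
      rw [Finset.sum_congr rfl fun x _ => key x, ← Finset.sum_mul, ← hZdef]
      apply eq_of_log_eq (by positivity) (by positivity)
      rw [Real.log_mul hZpos.ne' (Real.rpow_pos_of_pos hZpos _).ne',
        Real.log_rpow hZpos, Real.log_rpow hZpos]
      ring
  · -- upper bound via Hölder's inequality
    rintro v ⟨b, hb_pos, hb_sum, rfl⟩
    set S : ℝ := ∑ x, p x * (b x * o x) ^ (1 - R) with hSdef
    have hSterm : ∀ x, 0 < p x * (b x * o x) ^ (1 - R) := fun x =>
      mul_pos (hp_pos x) (Real.rpow_pos_of_pos (mul_pos (hb_pos x) (ho_pos x)) _)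
    have hSpos : 0 < S := Finset.sum_pos (fun x _ => hSterm x) Finset.univ_nonempty
    have hconj : Real.HolderConjugate R (R / (R - 1)) :=
      (Real.holderConjugate_iff_eq_conjExponent hR).2 rfl
    have holder := Real.inner_le_Lp_mul_Lq_of_nonneg (Finset.univ (α := X)) hconj
      (f := fun x => (p x * (b x * o x) ^ (1 - R)) ^ (1 / R))
      (g := fun x => (b x) ^ ((R - 1) / R))
      (fun x _ => Real.rpow_nonneg (hSterm x).le _)
      (fun x _ => Real.rpow_nonneg (hb_pos x).le _)
    -- simplify the three sums in Hölder
    have hfg : ∀ x, (p x * (b x * o x) ^ (1 - R)) ^ (1 / R) * (b x) ^ ((R - 1) / R)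
        = (p x) ^ (1 / R) * (1 / o x) ^ (1 - 1 / R) := by
      intro x
      have hpx := hp_pos x; have hox := ho_pos x; have hbx := hb_pos x
      rw [hinv x]
      apply eq_of_log_eq (by positivity) (by positivity)
      rw [Real.log_mul (Real.rpow_pos_of_pos (hSterm x) _).ne'
          (Real.rpow_pos_of_pos (hb_pos x) _).ne',
        Real.log_rpow (hSterm x), Real.log_rpow (hb_pos x),
        Real.log_mul (hp_pos x).ne'
          (Real.rpow_pos_of_pos (mul_pos (hb_pos x) (ho_pos x)) _).ne',
        Real.log_rpow (mul_pos (hb_pos x) (ho_pos x)),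
        Real.log_mul (hb_pos x).ne' (ho_pos x).ne',
        Real.log_mul (Real.rpow_pos_of_pos (hp_pos x) _).ne'
          (Real.rpow_pos_of_pos (ho_pos x) _).ne',
        Real.log_rpow (hp_pos x), Real.log_rpow (ho_pos x)]
      field_simp
      ring
    have hfR : ∀ x, ((p x * (b x * o x) ^ (1 - R)) ^ (1 / R)) ^ R
        = p x * (b x * o x) ^ (1 - R) := by
      intro x
      rw [← Real.rpow_mul (hSterm x).le, one_div, inv_mul_cancel₀ hR0.ne',
        Real.rpow_one]
    have hgq : ∀ x, ((b x) ^ ((R - 1) / R)) ^ (R / (R - 1)) = b x := by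
      intro x
      rw [← Real.rpow_mul (hb_pos x).le, div_mul_div_comm, mul_comm,
        div_self (mul_pos hR0 (by linarith : (0:ℝ) < R - 1)).ne', Real.rpow_one]
    rw [Finset.sum_congr rfl fun x _ => hfg x,
      Finset.sum_congr rfl fun x _ => hfR x,
      Finset.sum_congr rfl fun x _ => hgq x, hb_sum, Real.one_rpow, mul_one,
      ← hZdef, ← hSdef] at holder
    -- conclude : Z ≤ S ^ (1/R), hence Z ^ R ≤ S
    have hZRS : Z ^ R ≤ S := by
      calc Z ^ R ≤ (S ^ (1 / R)) ^ R :=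
            Real.rpow_le_rpow hZpos.le holder hR0.le
        _ = S := by
            rw [← Real.rpow_mul hSpos.le, one_div, inv_mul_cancel₀ hR0.ne',
              Real.rpow_one]
    have hlog : Real.log (Z ^ R) ≤ Real.log S :=
      Real.log_le_log (by positivity) hZRS
    rw [hval]
    have hneg : (1 : ℝ) / (1 - R) ≤ 0 := by
      apply div_nonpos_of_nonneg_of_nonpos <;> linarith
    exact mul_le_mul_of_nonpos_left hlog hneg
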